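/- For each r ∈ ℕ let a_r : ℕ → ℕ be defined by a_r(0) = r and a_r(n+1) = C(a_r(n), 2), and let β_r(n) = a_r(n) mod 2. For all k ≥ 1, the map Φ_k sending r ∈ {0, ..., 2^k - 1} to the bit string (β_r(0), β_r(1), ..., β_r(k-1)) ∈ {0,1}^k is a bijection. -/

import Mathlib

private lemma two_mul_choose (x : ℕ) : (2 : ℤ) * (x.choose 2 : ℤ) = (x : ℤ) * ((x : ℤ) - 1) := by
  cases x with
  | zero => simp
  | succ n =>
    have h : 2 * ((n+1).choose 2) = (n+1) * n := by
      rw [Nat.choose_two_right]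
      have : (n+1) * ((n+1) - 1) = n * (n+1) := by
        simp [Nat.succ_sub_one]; ring
      rw [this, Nat.mul_div_cancel' (Nat.even_mul_succ_self n).two_dvd]
      exact Nat.mul_comm n (n+1)
    have := congrArg (fun m : ℕ => (m : ℤ)) h
    push_cast at this ⊢
    linarith

private lemma key_step (k r s : ℕ) (h2 : r % 2 = s % 2)
    (hk : r.choose 2 ≡ s.choose 2 [MOD 2 ^ k]) : r ≡ s [MOD 2 ^ (k + 1)] := by
  have hdvd2 : (2 : ℤ) ∣ (s : ℤ) - (r : ℤ) := (Nat.modEq_iff_dvd (n := 2)).mp h2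
  obtain ⟨d, hd⟩ := hdvd2
  have hdvdk : ((2 : ℤ) ^ k) ∣ (s.choose 2 : ℤ) - (r.choose 2 : ℤ) := by
    have := (Nat.modEq_iff_dvd (n := 2 ^ k)).mp hk
    push_cast at this
    exact this
  have heq : (s.choose 2 : ℤ) - (r.choose 2 : ℤ) = d * ((s : ℤ) + (r : ℤ) - 1) := by
    have h1 : (2 : ℤ) * ((s.choose 2 : ℤ) - (r.choose 2 : ℤ))
        = (2 : ℤ) * (d * ((s : ℤ) + (r : ℤ) - 1)) := by
      rw [mul_sub, two_mul_choose, two_mul_choose]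
      nlinarith [hd]
    exact mul_left_cancel₀ two_ne_zero h1
  have hodd : Odd ((s : ℤ) + (r : ℤ) - 1) := by
    have heven : Even ((s : ℤ) + (r : ℤ)) := ⟨d + r, by linarith⟩
    exact heven.sub_odd odd_one
  have hcop : IsCoprime ((2 : ℤ) ^ k) ((s : ℤ) + (r : ℤ) - 1) := by
    apply IsCoprime.pow_left
    refine (Int.prime_two.coprime_iff_not_dvd).mpr ?_
    rintro ⟨c, hc⟩
    exact (Int.not_even_iff_odd.mpr hodd) ⟨c, by linarith⟩
  have hdvdd : ((2 : ℤ) ^ k) ∣ d := hcop.dvd_of_dvd_mul_right (heq ▸ hdvdk)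
  obtain ⟨e, he⟩ := hdvdd
  refine (Nat.modEq_iff_dvd (n := 2 ^ (k + 1))).mpr ?_
  push_cast
  exact ⟨e, by rw [hd, he]; ring⟩

private lemma inj_aux : ∀ k r s : ℕ,
    (∀ i < k, (fun x : ℕ => x.choose 2)^[i] r % 2 = (fun x : ℕ => x.choose 2)^[i] s % 2) →
    r ≡ s [MOD 2 ^ k] := by
  intro k
  induction k with
  | zero => intro r s _; simp [Nat.ModEq, Nat.mod_one]
  | succ k ih =>
    intro r s h
    have h0 : r % 2 = s % 2 := by simpa using h 0 (Nat.succ_pos k)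
    have hnext : (r.choose 2) ≡ (s.choose 2) [MOD 2 ^ k] := by
      apply ih
      intro i hi
      have := h (i + 1) (Nat.succ_lt_succ hi)
      simpa [Function.iterate_succ_apply] using this
    exact key_step k r s h0 hnext

theorem stmt_2 (a : ℕ → ℕ → ℕ) (h0 : ∀ r, a r 0 = r)
    (hrec : ∀ r n, a r (n + 1) = (a r n).choose 2)
    (k : ℕ) (hk : 1 ≤ k) :
    Function.Bijective (fun r : Fin (2 ^ k) =>
      (fun i : Fin k => (⟨a r.val i.val % 2, Nat.mod_lt _ (by norm_num)⟩ : Fin 2))) := by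
  have ha : ∀ r n, a r n = (fun x : ℕ => x.choose 2)^[n] r := by
    intro r n
    induction n with
    | zero => simpa using h0 r
    | succ n ihn => rw [hrec, ihn, Function.iterate_succ_apply']
  rw [Fintype.bijective_iff_injective_and_card]
  constructor
  · intro r s h
    have hmod : (r : ℕ) ≡ (s : ℕ) [MOD 2 ^ k] := by
      apply inj_aux k
      intro i hi
      have := congrArg (fun f => (f ⟨i, hi⟩ : Fin 2).val) h
      simp only at this
      rw [ha, ha] at this
      exact this
    exact Fin.ext (Nat.ModEq.eq_of_lt_of_lt hmod r.isLt s.isLt)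
  · simp
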